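/- For k ≤ n+1, the smallest radius of a ball in ℝⁿ containing k nonoverlapping unit balls equals 1 + √(2 − 2/k), achieved when the centers form a regular (k−1)-simplex inscribed in the concentric sphere of radius √(2 − 2/k). -/

import Mathlib

open Finset

noncomputable def embDLE (d n : ℕ) (h : d ≤ n) :
    EuclideanSpace ℝ (Fin d) →ₗᵢ[ℝ] EuclideanSpace ℝ (Fin n) where
  toLinearMap :=
    { toFun := fun f => (WithLp.toLp 2 (fun m => if hm : (m : ℕ) < d then f ⟨m, hm⟩ else 0) :
        EuclideanSpace ℝ (Fin n))
      map_add' := by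
        intro f g; ext m
        by_cases hm : (m : ℕ) < d <;> simp [hm, PiLp.add_apply]
      map_smul' := by
        intro c f; ext m
        by_cases hm : (m : ℕ) < d <;> simp [hm, PiLp.smul_apply] }
  norm_map' := by
    intro f
    rw [EuclideanSpace.norm_eq, EuclideanSpace.norm_eq]
    congr 1
    have key : ∀ m : ℕ, (if hm : m < d then ‖f ⟨m, hm⟩‖ ^ 2 else 0) =
        ‖(if hm : m < d then f ⟨m, hm⟩ else 0 : ℝ)‖ ^ 2 := by
      intro m; by_cases hm : m < d <;> simp [hm]
    calc ∑ m : Fin n, ‖(if hm : (m:ℕ) < d then f ⟨m, hm⟩ else 0 : ℝ)‖ ^ 2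
        = ∑ m ∈ range n, (if hm : m < d then ‖f ⟨m, hm⟩‖ ^ 2 else 0) := by
          rw [← Fin.sum_univ_eq_sum_range (fun m => (if hm : m < d then ‖f ⟨m, hm⟩‖ ^ 2 else 0))]
          exact Finset.sum_congr rfl fun m _ => (key m).symm
      _ = ∑ m ∈ range d, (if hm : m < d then ‖f ⟨m, hm⟩‖ ^ 2 else 0) := by
          refine (Finset.sum_subset (Finset.range_subset_range.2 h) ?_).symm
          intro x _ hx
          rw [dif_neg (by simpa using hx)]
      _ = ∑ i : Fin d, ‖f i‖ ^ 2 := by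
          rw [← Fin.sum_univ_eq_sum_range (fun m => (if hm : m < d then ‖f ⟨m, hm⟩‖ ^ 2 else 0))]
          exact Finset.sum_congr rfl fun i _ => by simp [i.is_lt]

open Finset

noncomputable def onesVec (k : ℕ) : EuclideanSpace ℝ (Fin k) := WithLp.toLp 2 (fun _ => 1)

lemma simplex_exists_aux (k : ℕ) (hk : 1 ≤ k) :
    ∃ p : Fin k → EuclideanSpace ℝ (Fin k),
      (∀ i, p i ∈ (ℝ ∙ (onesVec k))ᗮ) ∧
      (∀ i, ‖p i‖ = Real.sqrt (2 - 2 / k)) ∧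
      ∀ i j, i ≠ j → dist (p i) (p j) = 2 := by
  have hk0 : (0:ℝ) < (k:ℝ) := by exact_mod_cast hk
  set c : ℝ := Real.sqrt 2 with hcdef
  have hc : c ^ 2 = 2 := Real.sq_sqrt (by norm_num)
  set q : Fin k → EuclideanSpace ℝ (Fin k) :=
    fun i => WithLp.toLp 2 (fun m => c * ((if m = i then 1 else 0) - 1 / k)) with hq
  refine ⟨q, ?_, ?_, ?_⟩
  · intro i
    rw [Submodule.mem_orthogonal_singleton_iff_inner_right, PiLp.inner_apply]
    simp only [RCLike.inner_apply, conj_trivial, onesVec, one_mul, mul_one, hq, PiLp.toLp_apply]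
    rw [← Finset.mul_sum, Finset.sum_sub_distrib,
      Finset.sum_ite_eq' Finset.univ i]
    simp only [Finset.mem_univ, if_true, Finset.sum_const, Finset.card_univ,
      Fintype.card_fin, nsmul_eq_mul]
    rw [mul_one_div, div_self (ne_of_gt hk0), sub_self, mul_zero]
  · intro i
    rw [EuclideanSpace.norm_eq]
    congr 1
    have key : ∀ m : Fin k, ‖q i m‖ ^ 2 =
        2 * (if m = i then 1 else 0) - 4 / k * (if m = i then 1 else 0) + 2 / k ^ 2 := by
      intro m
      rw [Real.norm_eq_abs, sq_abs, hq]
      by_cases hm : m = i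
      · simp only [if_pos hm]
        rw [mul_pow, hc]; ring
      · simp only [if_neg hm]
        rw [mul_pow, hc]; ring
    rw [Finset.sum_congr rfl fun m _ => key m]
    rw [Finset.sum_add_distrib, Finset.sum_sub_distrib, ← Finset.mul_sum, ← Finset.mul_sum,
      Finset.sum_ite_eq' Finset.univ i]
    simp only [Finset.mem_univ, if_true, Finset.sum_const, Finset.card_univ,
      Fintype.card_fin, nsmul_eq_mul]
    field_simp
    ring
  · intro i j hij
    rw [EuclideanSpace.dist_eq]
    have key : ∀ m : Fin k, dist (q i m) (q j m) ^ 2 =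
        (if m = i then 2 else 0) + (if m = j then 2 else 0) := by
      intro m
      rw [Real.dist_eq, sq_abs, hq]
      simp only
      by_cases hmi : m = i
      · have hmj : m ≠ j := fun h => hij (hmi ▸ h ▸ rfl)
        simp only [if_pos hmi, if_neg hmj]
        rw [show c * (1 - 1/(k:ℝ)) - c * (0 - 1/k) = c by ring, hc]
        norm_num
      · simp only [if_neg hmi]
        by_cases hmj : m = j
        · simp only [if_pos hmj]
          rw [show c * (0 - 1/(k:ℝ)) - c * (1 - 1/k) = -c by ring, neg_pow, hc]
          norm_num
        · simp only [if_neg hmj]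
          ring
    rw [Finset.sum_congr rfl fun m _ => key m, Finset.sum_add_distrib,
      Finset.sum_ite_eq' Finset.univ i, Finset.sum_ite_eq' Finset.univ j]
    simp only [Finset.mem_univ, if_true]
    rw [show (2:ℝ) + 2 = 4 by norm_num]
    rw [show (4:ℝ) = 2 ^ 2 by norm_num, Real.sqrt_sq (by norm_num)]

open Finset Module

lemma container_lower_bound {n k : ℕ} (hk : 1 ≤ k) (r : ℝ)
    (p : Fin k → EuclideanSpace ℝ (Fin n))
    (hr : ∀ i, ‖p i‖ ≤ r - 1)
    (hp : ∀ i j, i ≠ j → 2 ≤ dist (p i) (p j)) :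
    1 + Real.sqrt (2 - 2 / k) ≤ r := by
  have hk0 : (0:ℝ) < (k:ℝ) := by exact_mod_cast hk
  set S : ℝ := ∑ i, ‖p i‖ ^ 2 with hS'
  set T : EuclideanSpace ℝ (Fin n) := ∑ i, p i with hT'
  have hsum : ∑ i, ∑ j, ‖p i - p j‖ ^ 2 = 2 * k * S - 2 * ‖T‖ ^ 2 := by
    have step : ∀ i, ∑ j, ‖p i - p j‖ ^ 2
        = (k : ℝ) * ‖p i‖ ^ 2 - 2 * (inner ℝ (p i) T : ℝ) + S := by
      intro i
      simp only [norm_sub_sq_real]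
      rw [Finset.sum_add_distrib, Finset.sum_sub_distrib, ← Finset.mul_sum, ← inner_sum,
        Finset.sum_const, Finset.card_univ, Fintype.card_fin, nsmul_eq_mul]
    rw [Finset.sum_congr rfl fun i _ => step i, Finset.sum_add_distrib,
      Finset.sum_sub_distrib, ← Finset.mul_sum, ← Finset.mul_sum, ← sum_inner,
      real_inner_self_eq_norm_sq, Finset.sum_const, Finset.card_univ, Fintype.card_fin,
      nsmul_eq_mul]
    ring
  have hge : (k:ℝ) * (4 * k - 4) ≤ ∑ i, ∑ j, ‖p i - p j‖ ^ 2 := by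
    have inner' : ∀ i : Fin k, 4 * (k:ℝ) - 4 ≤ ∑ j, ‖p i - p j‖ ^ 2 := by
      intro i
      have h1 : ∑ j, ((4:ℝ) - if i = j then 4 else 0) ≤ ∑ j, ‖p i - p j‖ ^ 2 := by
        refine Finset.sum_le_sum fun j _ => ?_
        by_cases hij : i = j
        · simp only [if_pos hij]
          have : (0:ℝ) ≤ ‖p i - p j‖ ^ 2 := by positivity
          linarith
        · rw [if_neg hij]
          have h2 : 2 ≤ ‖p i - p j‖ := by rw [← dist_eq_norm]; exact hp i j hij
          nlinarith [norm_nonneg (p i - p j)]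
      have h2 : ∑ j, ((4:ℝ) - if i = j then 4 else 0) = 4 * k - 4 := by
        rw [Finset.sum_sub_distrib, Finset.sum_ite_eq Finset.univ i (fun _ => (4:ℝ)),
          Finset.sum_const, Finset.card_univ, Fintype.card_fin, nsmul_eq_mul]
        simp [mul_comm]
      linarith [h1, h2.symm.le]
    calc (k:ℝ) * (4 * k - 4) = ∑ _i : Fin k, (4 * (k:ℝ) - 4) := by
          rw [Finset.sum_const, Finset.card_univ, Fintype.card_fin, nsmul_eq_mul]
      _ ≤ _ := Finset.sum_le_sum fun i _ => inner' i
  have h0 : (0:ℝ) ≤ r - 1 := le_trans (norm_nonneg _) (hr ⟨0, hk⟩)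
  have hSle : S ≤ (k:ℝ) * (r - 1) ^ 2 := by
    calc S ≤ ∑ _i : Fin k, (r - 1) ^ 2 := by
          refine Finset.sum_le_sum fun i _ => ?_
          have := hr i
          nlinarith [norm_nonneg (p i)]
      _ = (k:ℝ) * (r - 1) ^ 2 := by
          rw [Finset.sum_const, Finset.card_univ, Fintype.card_fin, nsmul_eq_mul]
  have hT0 : (0:ℝ) ≤ ‖T‖ ^ 2 := by positivity
  have h1 : (k:ℝ) * (4 * k - 4) ≤ 2 * k * S - 2 * ‖T‖ ^ 2 := hsum ▸ hge
  have h2 : 2 * (k:ℝ) - 2 ≤ (k:ℝ) * (r - 1) ^ 2 := by nlinarith [hSle, hT0, h1, hk0]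
  have hdiv : 2 / (k:ℝ) * k = 2 := div_mul_cancel₀ 2 (ne_of_gt hk0)
  have hkey : 2 - 2 / (k:ℝ) ≤ (r - 1) ^ 2 := by nlinarith [h2, hk0, hdiv]
  have : Real.sqrt (2 - 2 / k) ≤ r - 1 :=
    calc Real.sqrt (2 - 2 / k) ≤ Real.sqrt ((r - 1) ^ 2) := Real.sqrt_le_sqrt hkey
      _ = r - 1 := Real.sqrt_sq h0
  linarith

theorem min_container_radius_simplex (n k : ℕ) (hk : 1 ≤ k) (hkn : k ≤ n + 1) :
    IsLeast {r : ℝ | ∃ p : Fin k → EuclideanSpace ℝ (Fin n),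
        (∀ i, ‖p i‖ ≤ r - 1) ∧ ∀ i j, i ≠ j → 2 ≤ dist (p i) (p j)}
      (1 + Real.sqrt (2 - 2 / k)) ∧
    ∃ p : Fin k → EuclideanSpace ℝ (Fin n),
      (∀ i, ‖p i‖ = Real.sqrt (2 - 2 / k)) ∧
      ∀ i j, i ≠ j → dist (p i) (p j) = 2 := by
  obtain ⟨q, hqmem, hqnorm, hqdist⟩ := simplex_exists_aux k hk
  have hones : onesVec k ≠ 0 := by
    intro h
    have h0 : onesVec k ⟨0, hk⟩ = 0 := by rw [h]; rfl
    simp [onesVec] at h0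
  haveI : Fact (Module.finrank ℝ (EuclideanSpace ℝ (Fin k)) = (k - 1) + 1) :=
    ⟨by rw [finrank_euclideanSpace_fin]; omega⟩
  have hfr : Module.finrank ℝ ((ℝ ∙ onesVec k)ᗮ) = k - 1 :=
    Submodule.finrank_orthogonal_span_singleton hones
  have hdn : Module.finrank ℝ ((ℝ ∙ onesVec k)ᗮ) ≤ n := by rw [hfr]; omega
  set B := stdOrthonormalBasis ℝ ((ℝ ∙ onesVec k)ᗮ) with hB
  set p : Fin k → EuclideanSpace ℝ (Fin n) :=
    fun i => embDLE _ n hdn (B.repr ⟨q i, hqmem i⟩) with hp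
  have hpnorm : ∀ i, ‖p i‖ = Real.sqrt (2 - 2 / k) := by
    intro i
    rw [hp]
    rw [(embDLE _ n hdn).norm_map, B.repr.norm_map]
    exact hqnorm i
  have hpdist : ∀ i j, i ≠ j → dist (p i) (p j) = 2 := by
    intro i j hij
    rw [hp]
    rw [(embDLE _ n hdn).dist_map, B.repr.dist_map, Subtype.dist_eq]
    exact hqdist i j hij
  refine ⟨⟨⟨p, fun i => ?_, fun i j hij => (hpdist i j hij).ge⟩, ?_⟩, p, hpnorm, hpdist⟩
  · rw [hpnorm i]; ring_nf; exact le_refl _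
  · rintro r ⟨p', h1, h2⟩
    exact container_lower_bound hk r p' h1 h2
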